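/- Let n = k + l with k ≥ 2 and l ≥ 1, let α be a type, and let ξ = (ξ¹, …, ξ^{n−1}) be a map assigning to each z ∈ α a full flag of submodules of ℝⁿ satisfying the general position (hyperconvexity) condition. Fix distinct points x, y ∈ α and define, for 1 ≤ j ≤ k−1 and z ∈ α, the submodule τ_{yx}^j(z) of ξ^k(y) by: τ_{yx}^j(z) = (ξ^l(x) ⊔ ξ^j(z)) ⊓ ξ^k(y) if z ∉ {x, y}; τ_{yx}^j(x) = ξ^{l+j}(x) ⊓ ξ^k(y); and τ_{yx}^j(y) = ξ^j(y). Then for every z ∈ α and every 1 ≤ j ≤ k−1 one has finrank τ_{yx}^j(z) = j, τ_{yx}^j(z) ≤ ξ^k(y), and τ_{yx}^j(z) ≤ τ_{yx}^{j+1}(z) whenever j ≤ k−2; that is, τ_{yx}(z) is a full flag in the k-dimensional space ξ^k(y). -/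

import Mathlib

/-- **Frenet Projection Lemma** (Lemma 4.9), flag part: the projected curve
`τ_{yx}` takes values in full flags of the `k`-dimensional space `ξ^k(y)`:
for every `z` and `1 ≤ j ≤ k-1`, `dim τ_{yx}^j(z) = j`, `τ_{yx}^j(z) ≤ ξ^k(y)`,
and `τ_{yx}^j(z) ≤ τ_{yx}^{j+1}(z)` whenever `j ≤ k-2`. -/
theorem frenet_projection_is_flag
    {α : Type*} [DecidableEq α] (k l : ℕ) (hk : 2 ≤ k) (hl : 1 ≤ l)
    (ξ : α → ℕ → Submodule ℝ (Fin (k + l) → ℝ))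
    (hrank : ∀ z i, 1 ≤ i → i ≤ k + l - 1 → Module.finrank ℝ ↥(ξ z i) = i)
    (hmono : ∀ z i, 1 ≤ i → i ≤ k + l - 2 → ξ z i ≤ ξ z (i + 1))
    (htop : ∀ z, ξ z (k + l) = ⊤)
    (hgp : ∀ (p : ℕ) (w : Fin p → α), Function.Injective w →
      ∀ m : Fin p → ℕ, (∀ i, 1 ≤ m i) → (∀ i, m i ≤ k + l - 1) →
      (∑ i, m i) ≤ k + l → iSupIndep (fun i => ξ (w i) (m i)))
    (x y : α) (hxy : x ≠ y)
    (τ : ℕ → α → Submodule ℝ (Fin (k + l) → ℝ))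
    (hτ : ∀ j z, τ j z =
      if z = x then ξ x (l + j) ⊓ ξ y k
      else if z = y then ξ y j
      else (ξ x l ⊔ ξ z j) ⊓ ξ y k) :
    ∀ (z : α) (j : ℕ), 1 ≤ j → j ≤ k - 1 →
      Module.finrank ℝ ↥(τ j z) = j ∧ τ j z ≤ ξ y k ∧
        (j ≤ k - 2 → τ j z ≤ τ (j + 1) z) := by
  -- monotonicity of flags between arbitrary indices
  have hmono' : ∀ z i i', 1 ≤ i → i ≤ i' → i' ≤ k + l - 1 → ξ z i ≤ ξ z i' := by
    intro z i i' h1 h2 h3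
    induction i' with
    | zero => omega
    | succ m ih =>
      rcases Nat.eq_or_lt_of_le h2 with h | hlt
      · exact h ▸ le_rfl
      · exact le_trans (ih (by omega) (by omega)) (hmono z m (by omega) (by omega))
  -- disjointness from general position
  have hdisj : ∀ a b : α, a ≠ b → ∀ p q, 1 ≤ p → p ≤ k + l - 1 → 1 ≤ q →
      q ≤ k + l - 1 → p + q ≤ k + l → Disjoint (ξ a p) (ξ b q) := by
    intro a b hab p q hp1 hp2 hq1 hq2 hpq
    have hinj : Function.Injective ![a, b] := by
      intro i j hij
      match i, j with
      | 0, 0 => rfl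
      | 1, 1 => rfl
      | 0, 1 => exact absurd hij hab
      | 1, 0 => exact absurd hij (Ne.symm hab)
    have hind := hgp 2 ![a, b] hinj ![p, q]
      (by intro i; match i with | 0 => exact hp1 | 1 => exact hq1)
      (by intro i; match i with | 0 => exact hp2 | 1 => exact hq2)
      (by rw [Fin.sum_univ_two]; exact hpq)
    have h01 := hind.pairwiseDisjoint (show (0 : Fin 2) ≠ 1 by decide)
    simpa [Function.onFun] using h01
  have hn : Module.finrank ℝ (Fin (k + l) → ℝ) = k + l := Module.finrank_fin_fun ℝ
  -- finrank of a disjoint sup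
  have hsup : ∀ A B : Submodule ℝ (Fin (k + l) → ℝ), Disjoint A B →
      Module.finrank ℝ ↥(A ⊔ B) = Module.finrank ℝ A + Module.finrank ℝ B := by
    intro A B hAB
    have h := Submodule.finrank_sup_add_finrank_inf_eq A B
    rw [hAB.eq_bot] at h
    simpa using h
  have htopxy : ξ x l ⊔ ξ y k = ⊤ := by
    apply Submodule.eq_top_of_finrank_eq
    rw [hsup _ _ (hdisj x y hxy l k hl (by omega) (by omega) (by omega) (by omega)),
      hrank x l hl (by omega), hrank y k (by omega) (by omega), hn]
    omega
  -- key dimension formula for intersections with ξ y k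
  have hinf : ∀ A : Submodule ℝ (Fin (k + l) → ℝ), ξ x l ≤ A →
      Module.finrank ℝ ↥(A ⊓ ξ y k) + (k + l) = Module.finrank ℝ A + k := by
    intro A hA
    have hAt : A ⊔ ξ y k = ⊤ := by
      rw [eq_top_iff, ← htopxy]
      exact sup_le_sup_right hA _
    have h := Submodule.finrank_sup_add_finrank_inf_eq A (ξ y k)
    rw [hAt, hrank y k (by omega) (by omega)] at h
    have ht : Module.finrank ℝ (⊤ : Submodule ℝ (Fin (k + l) → ℝ)) = k + l := by
      rw [finrank_top]; exact hn
    omega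
  intro z j hj1 hj2
  rcases eq_or_ne z x with rfl | hzx
  · -- z = x
    have ej : ∀ m, τ m z = ξ z (l + m) ⊓ ξ y k := by
      intro m; rw [hτ m z, if_pos rfl]
    have hle : ∀ m, 1 ≤ m → m ≤ k - 1 → ξ z l ≤ ξ z (l + m) :=
      fun m h1 h2 => hmono' z l (l + m) hl (by omega) (by omega)
    refine ⟨?_, ?_, ?_⟩
    · have h := hinf (ξ z (l + j)) (hle j hj1 hj2)
      rw [hrank z (l + j) (by omega) (by omega)] at h
      rw [ej]; omega
    · rw [ej]; exact inf_le_right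
    · intro hjk2
      rw [ej, ej]
      exact inf_le_inf_right _ (hmono' z (l + j) (l + (j + 1)) (by omega) (by omega) (by omega))
  · rcases eq_or_ne z y with rfl | hzy
    · -- z = y
      have ej : ∀ m, τ m z = ξ z m := by
        intro m; rw [hτ m z, if_neg hzx, if_pos rfl]
      refine ⟨?_, ?_, ?_⟩
      · rw [ej]; exact hrank z j hj1 (by omega)
      · rw [ej]; exact hmono' z j k hj1 (by omega) (by omega)
      · intro hjk2
        rw [ej, ej]
        exact hmono' z j (j + 1) hj1 (by omega) (by omega)
    · -- generic z
      have ej : ∀ m, τ m z = (ξ x l ⊔ ξ z m) ⊓ ξ y k := by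
        intro m; rw [hτ m z, if_neg hzx, if_neg hzy]
      refine ⟨?_, ?_, ?_⟩
      · have hd : Disjoint (ξ x l) (ξ z j) :=
          hdisj x z (Ne.symm hzx) l j hl (by omega) hj1 (by omega) (by omega)
        have hA : Module.finrank ℝ ↥(ξ x l ⊔ ξ z j) = l + j := by
          rw [hsup _ _ hd, hrank x l hl (by omega), hrank z j hj1 (by omega)]
        have h := hinf (ξ x l ⊔ ξ z j) le_sup_left
        rw [hA] at h
        rw [ej]; omega
      · rw [ej]; exact inf_le_right
      · intro hjk2
        rw [ej, ej]
        exact inf_le_inf_right _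
          (sup_le_sup_left (hmono' z j (j + 1) hj1 (by omega) (by omega)) _)
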